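/- Let f be a graph invariant with values in a commutative ring R satisfying the deletion-contraction relation f(G) = A·f(G/e) + B·f(G−e) for e neither a loop nor an isthmus, f(H·K) = C·f(H)·f(K) for one-point unions, f(T₁) = D, and f(L₁) = E. Then for the graph Dₙ consisting of two vertices joined by n parallel edges (n ≥ 1), (B − C·E)·f(Dₙ) = B^{n−1}·D·(B − C·E) + A·E·(B^{n−1} − (C·E)^{n−1}). -/

import Mathlib

/-- A finite multigraph (loops and parallel edges allowed), with a chosen
orientation of each edge given by source and target maps. -/
structure Multigraph where
  V : Type
  E : Type
  [fintypeV : Fintype V]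
  [fintypeE : Fintype E]
  [decEqV : DecidableEq V]
  [decEqE : DecidableEq E]
  src : E → V
  tgt : E → V

attribute [instance] Multigraph.fintypeV Multigraph.fintypeE
  Multigraph.decEqV Multigraph.decEqE

namespace Multigraph

variable (G : Multigraph)

/-- Two vertices are directly joined by an edge of the spanning subgraph `[G:S]`. -/
def connRel (S : Finset G.E) (a b : G.V) : Prop :=
  ∃ e ∈ S, (G.src e = a ∧ G.tgt e = b)

/-- The "same connected component of `[G:S]`" equivalence relation. -/
def connSetoid (S : Finset G.E) : Setoid G.V := Relation.EqvGen.setoid (G.connRel S)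

/-- The set of connected components of the spanning subgraph `[G:S]`. -/
def Comp (S : Finset G.E) : Type := Quotient (G.connSetoid S)

noncomputable instance (S : Finset G.E) : Fintype (G.Comp S) := by
  classical exact Quotient.fintype _

noncomputable instance (S : Finset G.E) : DecidableEq (G.Comp S) :=
  Classical.decEq _

/-- `b₀([G:S])`: the number of connected components of the spanning subgraph `[G:S]`. -/
noncomputable def b0 (S : Finset G.E) : ℕ := Fintype.card (G.Comp S)

/-- The simplicial boundary map `ℚ^S → ℚ^V`, sending an edge to (target − source). -/
noncomputable def boundary (S : Finset G.E) : ((↥S) → ℚ) →ₗ[ℚ] (G.V → ℚ) :=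
  ∑ e : ↥S, LinearMap.smulRight (LinearMap.proj e)
    (fun v => (if G.tgt e.1 = v then (1 : ℚ) else 0) - (if G.src e.1 = v then 1 else 0))

/-- `b₁([G:S])`: the first Betti number of `[G:S]`, i.e. the rank of its cycle space. -/
noncomputable def b1 (S : Finset G.E) : ℕ :=
  Module.finrank ℚ (LinearMap.ker (G.boundary S))

end Multigraph

namespace Multigraph

variable (G : Multigraph)

/-- The graph `G − e` obtained by deleting the edge `e`. -/
def deleteEdge (e : G.E) : Multigraph where
  V := G.V
  E := {e' : G.E // e' ≠ e}
  src := fun x => G.src x.1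
  tgt := fun x => G.tgt x.1

/-- The equivalence relation identifying the two endpoints of `e`. -/
def contractSetoid (e : G.E) : Setoid G.V :=
  Relation.EqvGen.setoid (fun a b => a = G.src e ∧ b = G.tgt e)

/-- The graph `G / e` obtained by contracting the edge `e` to a vertex. -/
noncomputable def contractEdge (e : G.E) : Multigraph where
  V := Quotient (G.contractSetoid e)
  E := {e' : G.E // e' ≠ e}
  fintypeV := by classical exact Quotient.fintype _
  decEqV := Classical.decEq _
  src := fun x => Quotient.mk (G.contractSetoid e) (G.src x.1)
  tgt := fun x => Quotient.mk (G.contractSetoid e) (G.tgt x.1)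

/-- The number of connected components of `G`. -/
noncomputable def b0full : ℕ := G.b0 Finset.univ

/-- `G` is connected. -/
def Connected : Prop := G.b0full = 1

/-- `e` is a loop: it joins a vertex to itself. -/
def IsLoop (e : G.E) : Prop := G.src e = G.tgt e

/-- `e` is an isthmus: deleting it increases the number of connected components. -/
noncomputable def IsIsthmus (e : G.E) : Prop := (G.deleteEdge e).b0full ≠ G.b0full

/-- `G` is a tree: connected and acyclic (`|E| + 1 = |V|`). -/
def IsTree : Prop := G.Connected ∧ Fintype.card G.E + 1 = Fintype.card G.V

/-- The degree of a vertex (loops counted twice). -/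
def degree (v : G.V) : ℕ :=
  (Finset.univ.filter (fun e => G.src e = v)).card +
    (Finset.univ.filter (fun e => G.tgt e = v)).card

/-- `G` is a simple cycle with `n` vertices and `n` edges. -/
def IsCycle (n : ℕ) : Prop :=
  G.Connected ∧ Fintype.card G.V = n ∧ Fintype.card G.E = n ∧ ∀ v, G.degree v = 2

/-- The one-point union `H·K`, obtained from the disjoint union of `H` and `K`
by identifying the vertex `h` of `H` with the vertex `k` of `K`. -/
def wedge (H K : Multigraph) (h : H.V) (k : K.V) : Multigraph where
  V := H.V ⊕ {v : K.V // v ≠ k}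
  E := H.E ⊕ K.E
  src := Sum.elim (fun e => Sum.inl (H.src e))
    (fun e => if hv : K.src e = k then Sum.inl h else Sum.inr ⟨K.src e, hv⟩)
  tgt := Sum.elim (fun e => Sum.inl (H.tgt e))
    (fun e => if hv : K.tgt e = k then Sum.inl h else Sum.inr ⟨K.tgt e, hv⟩)

/-- Isomorphism of multigraphs (edges may be matched with either orientation). -/
def Iso (H : Multigraph) : Prop :=
  ∃ (φ : G.V ≃ H.V) (ψ : G.E ≃ H.E), ∀ e : G.E,
    (H.src (ψ e) = φ (G.src e) ∧ H.tgt (ψ e) = φ (G.tgt e)) ∨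
    (H.src (ψ e) = φ (G.tgt e) ∧ H.tgt (ψ e) = φ (G.src e))

end Multigraph


section Aux

lemma two_cover {α : Type} [Fintype α] [DecidableEq α] (h : Fintype.card α = 2)
    {a b : α} (hab : a ≠ b) (x : α) : x = a ∨ x = b := by
  by_contra hx
  push_neg at hx
  have h3 : ({x, a, b} : Finset α).card = 3 := by
    rw [Finset.card_insert_of_notMem (by simp [hx.1, hx.2]),
      Finset.card_insert_of_notMem (by simp [hab]), Finset.card_singleton]
  have := Finset.card_le_univ ({x, a, b} : Finset α)
  rw [h3, h] at this
  omega

lemma card_ne {α : Type} [Fintype α] [DecidableEq α] (e : α)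
    [Fintype {x : α // x ≠ e}] :
    Fintype.card {x : α // x ≠ e} = Fintype.card α - 1 := by
  have h1 := Fintype.card_subtype_compl (fun x : α => x = e)
  have h2 : Fintype.card {x : α // x = e} = 1 := Fintype.card_subtype_eq e
  rw [h2] at h1
  exact h1

open Multigraph in
lemma dipole_connected (G : Multigraph) (hV : Fintype.card G.V = 2)
    (hnl : ∀ e, ¬ G.IsLoop e) (e₀ : G.E) : G.b0full = 1 := by
  have hst : G.src e₀ ≠ G.tgt e₀ := hnl e₀
  have base : Relation.EqvGen (G.connRel Finset.univ) (G.src e₀) (G.tgt e₀) :=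
    Relation.EqvGen.rel _ _ ⟨e₀, Finset.mem_univ _, rfl, rfl⟩
  have key : ∀ a b : G.V, Relation.EqvGen (G.connRel Finset.univ) a b := by
    intro a b
    rcases two_cover hV hst a with ha | ha <;> rcases two_cover hV hst b with hb | hb <;>
      subst ha <;> subst hb
    · exact Relation.EqvGen.refl _
    · exact base
    · exact Relation.EqvGen.symm _ _ base
    · exact Relation.EqvGen.refl _
  show Fintype.card (G.Comp Finset.univ) = 1
  rw [Fintype.card_eq_one_iff]
  obtain ⟨v⟩ : Nonempty G.V := Fintype.card_pos_iff.mp (by omega)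
  refine ⟨Quotient.mk (G.connSetoid Finset.univ) v, fun y => ?_⟩
  induction y using Quotient.inductionOn with
  | h w => exact Quotient.sound (key w v)

open Multigraph in
lemma contract_card_V (G : Multigraph) (hV : Fintype.card G.V = 2)
    (e : G.E) (hnl : ¬ G.IsLoop e) :
    Fintype.card (G.contractEdge e).V = 1 := by
  have hst : G.src e ≠ G.tgt e := hnl
  have base : Relation.EqvGen (fun a b => a = G.src e ∧ b = G.tgt e) (G.src e) (G.tgt e) :=
    Relation.EqvGen.rel _ _ ⟨rfl, rfl⟩
  have key : ∀ a b : G.V, Relation.EqvGen (fun a b => a = G.src e ∧ b = G.tgt e) a b := by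
    intro a b
    rcases two_cover hV hst a with ha | ha <;> rcases two_cover hV hst b with hb | hb <;>
      subst ha <;> subst hb
    · exact Relation.EqvGen.refl _
    · exact base
    · exact Relation.EqvGen.symm _ _ base
    · exact Relation.EqvGen.refl _
  rw [Fintype.card_eq_one_iff]
  refine ⟨(Quotient.mk (G.contractSetoid e) (G.src e) : (G.contractEdge e).V), fun y => ?_⟩
  induction y using Quotient.inductionOn with
  | h w => exact Quotient.sound (key w (G.src e))

/-- The graph with one vertex and one loop. -/
def singleLoop : Multigraph where
  V := PUnit
  E := PUnit
  src := fun _ => PUnit.unit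
  tgt := fun _ => PUnit.unit

open Multigraph in
lemma loop_value {R : Type} [CommRing R] (C E : R) (f : Multigraph → R)
    (hiso : ∀ G H : Multigraph, G.Iso H → f G = f H)
    (hwedge : ∀ (H K : Multigraph) (h : H.V) (k : K.V),
      f (Multigraph.wedge H K h k) = C * f H * f K)
    (hL1 : ∀ G : Multigraph, Fintype.card G.V = 1 → Fintype.card G.E = 1 → f G = E) :
    ∀ (m : ℕ) (G : Multigraph), Fintype.card G.V = 1 → Fintype.card G.E = m + 1 →
      f G = C ^ m * E ^ (m + 1) := by
  intro m
  induction m with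
  | zero => intro G hV hE; simpa using hL1 G hV hE
  | succ m ih =>
    intro G hV hE
    obtain ⟨v₀, hv₀⟩ := Fintype.card_eq_one_iff.mp hV
    obtain ⟨e₀⟩ : Nonempty G.E := Fintype.card_pos_iff.mp (by omega)
    set H := G.deleteEdge e₀ with hH
    have hiso1 : G.Iso (Multigraph.wedge H singleLoop v₀ PUnit.unit) := by
      refine ⟨⟨fun v => Sum.inl v, Sum.elim id (fun _ => v₀), fun v => rfl, ?_⟩,
        ⟨fun e => if h : e = e₀ then Sum.inr PUnit.unit else Sum.inl ⟨e, h⟩,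
         Sum.elim Subtype.val (fun _ => e₀), ?_, ?_⟩, ?_⟩
      · rintro (v | ⟨⟨⟩, hx⟩)
        · rfl
        · exact absurd rfl hx
      · intro e
        by_cases h : e = e₀
        · exact (congrArg (Sum.elim Subtype.val (fun _ => e₀)) (dif_pos h)).trans h.symm
        · exact congrArg (Sum.elim Subtype.val (fun _ => e₀)) (dif_neg h)
      · rintro (⟨e, he⟩ | u)
        · exact dif_neg he
        · cases u; exact dif_pos rfl
      · intro e
        left
        by_cases h : e = e₀
        · subst h
          simp only [Equiv.coe_fn_mk, dif_pos rfl, Multigraph.wedge, Sum.elim_inr,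
            singleLoop, dite_true]
          exact ⟨by rw [hv₀ (G.src e)]; exact congrArg (Sum.elim _ _) (dif_pos rfl), by rw [hv₀ (G.tgt e)]; exact congrArg (Sum.elim _ _) (dif_pos rfl)⟩
        · simp only [Equiv.coe_fn_mk, dif_neg h, Multigraph.wedge, Sum.elim_inl]
          exact ⟨congrArg (Sum.elim _ _) (dif_neg h), congrArg (Sum.elim _ _) (dif_neg h)⟩
    have hcard : Fintype.card H.E = m + 1 := by
      have : Fintype.card H.E = Fintype.card G.E - 1 := card_ne e₀
      omega
    have hHV : Fintype.card H.V = 1 := hV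
    have hfH : f H = C ^ m * E ^ (m + 1) := ih H hHV hcard
    have hfK : f singleLoop = E := hL1 singleLoop rfl rfl
    rw [hiso G _ hiso1, hwedge H singleLoop v₀ PUnit.unit, hfH, hfK]
    ring

end Aux

open Multigraph in
/-- For a graph invariant `f` satisfying deletion–contraction, the one-point-union
rule, `f(T₁) = D` and `f(L₁) = E`, the dipole graph `Dₙ` (two vertices joined by
`n ≥ 1` parallel edges) satisfies
`(B − C·E)·f(Dₙ) = B^(n−1)·D·(B − C·E) + A·E·(B^(n−1) − (C·E)^(n−1))`. -/
theorem value_of_dipole {R : Type} [CommRing R] (A B C D E : R) (f : Multigraph → R)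
    (hiso : ∀ G H : Multigraph, G.Iso H → f G = f H)
    (hdc : ∀ (G : Multigraph) (e : G.E), ¬ G.IsLoop e → ¬ G.IsIsthmus e →
      f G = A * f (G.contractEdge e) + B * f (G.deleteEdge e))
    (hwedge : ∀ (H K : Multigraph) (h : H.V) (k : K.V),
      f (Multigraph.wedge H K h k) = C * f H * f K)
    (hT1 : ∀ G : Multigraph, Fintype.card G.V = 2 → Fintype.card G.E = 1 →
      (∀ e, ¬ G.IsLoop e) → f G = D)
    (hL1 : ∀ G : Multigraph, Fintype.card G.V = 1 → Fintype.card G.E = 1 → f G = E)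
    (n : ℕ) (hn : 1 ≤ n) (G : Multigraph)
    (hV : Fintype.card G.V = 2) (hE : Fintype.card G.E = n)
    (hnl : ∀ e, ¬ G.IsLoop e) :
    (B - C * E) * f G
      = B ^ (n - 1) * D * (B - C * E) + A * E * (B ^ (n - 1) - (C * E) ^ (n - 1)) := by
  induction n, hn using Nat.le_induction generalizing G with
  | base =>
    rw [hT1 G hV hE hnl]
    simp
    ring
  | succ n hn1 IH =>
    obtain ⟨m, rfl⟩ : ∃ m, n = m + 1 := ⟨n - 1, (Nat.succ_pred_eq_of_pos hn1).symm⟩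
    obtain ⟨e₀⟩ : Nonempty G.E := Fintype.card_pos_iff.mp (by omega)
    -- the deleted graph
    set Gd := G.deleteEdge e₀ with hGd
    have hGdV : Fintype.card Gd.V = 2 := hV
    have hGdE : Fintype.card Gd.E = m + 1 := by
      have : Fintype.card Gd.E = Fintype.card G.E - 1 := card_ne e₀
      omega
    have hGdnl : ∀ e, ¬ Gd.IsLoop e := fun e => hnl e.1
    obtain ⟨ed⟩ : Nonempty Gd.E := Fintype.card_pos_iff.mp (by omega)
    -- e₀ is not an isthmus
    have hni : ¬ G.IsIsthmus e₀ := by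
      unfold Multigraph.IsIsthmus
      rw [dipole_connected G hV hnl e₀, dipole_connected Gd hGdV hGdnl ed]
      simp
    -- value of the contracted graph
    have hcV : Fintype.card (G.contractEdge e₀).V = 1 := contract_card_V G hV e₀ (hnl e₀)
    have hcE : Fintype.card (G.contractEdge e₀).E = m + 1 := by
      have : Fintype.card (G.contractEdge e₀).E = Fintype.card G.E - 1 := card_ne e₀
      omega
    have hfc : f (G.contractEdge e₀) = C ^ m * E ^ (m + 1) :=
      loop_value C E f hiso hwedge hL1 m _ hcV hcE
    have hdce := hdc G e₀ (hnl e₀) hni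
    rw [hfc] at hdce
    have hIH := IH Gd hGdV hGdE hGdnl
    simp only [Nat.add_sub_cancel] at hIH ⊢
    linear_combination (B - C * E) * hdce + B * hIH
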